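/- Let ξ^1, …, ξ^ν be i.i.d. random variables, each uniformly distributed on [0,1], and set K^ν = ⌈2^{ν+1} log(ν+1)⌉. Then P( for every k ∈ {1, …, K^ν} there exists i ∈ {1, …, ν} with bit_k(ξ^i) = 0 ) = (1 − 2^{−ν})^{K^ν} ≤ exp(−2^{−ν} K^ν) ≤ 1/(ν+1)². -/

import Mathlib

open MeasureTheory ProbabilityTheory Finset
open scoped ENNReal

/-- The `k`-th binary digit of `ξ`: `bit_k(ξ) = ⌊2^k ξ⌋ − 2⌊2^{k−1} ξ⌋`. -/
noncomputable def bitk (k : ℕ) (ξ : ℝ) : ℤ :=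
  ⌊(2 : ℝ) ^ k * ξ⌋ - 2 * ⌊(2 : ℝ) ^ (k - 1) * ξ⌋


lemma card_bits (K : ℕ) (t' : Finset ℕ) (ht' : ∀ m ∈ t', m < K) :
    ((Finset.range (2^K)).filter (fun j => ∀ m ∈ t', j / 2^m % 2 = 1)).card
      = 2^(K - t'.card) := by
  classical
  set s : Fin K → Finset (Fin 2) := fun i => if (i : ℕ) ∈ t' then {1} else Finset.univ with hs
  have hsymm : ∀ (a : Fin (2^K)) (b : Fin K),
      ((finFunctionFinEquiv.symm a b : Fin 2) : ℕ) = (a : ℕ) / 2^(b:ℕ) % 2 := fun a b => rfl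
  have himg : (Fintype.piFinset s).image (fun f => ((finFunctionFinEquiv f : Fin (2^K)) : ℕ))
      = (Finset.range (2^K)).filter (fun j => ∀ m ∈ t', j / 2^m % 2 = 1) := by
    ext j
    simp only [mem_image, mem_filter, mem_range, Fintype.mem_piFinset]
    constructor
    · rintro ⟨f, hf, rfl⟩
      refine ⟨(finFunctionFinEquiv f).isLt, fun m hm => ?_⟩
      have hmK : m < K := ht' m hm
      have h1 : f ⟨m, hmK⟩ ∈ s ⟨m, hmK⟩ := hf _
      rw [hs] at h1
      simp only [hm, if_pos] at h1
      have h2 : f ⟨m, hmK⟩ = 1 := by simpa using h1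
      have := hsymm (finFunctionFinEquiv f) ⟨m, hmK⟩
      rw [Equiv.symm_apply_apply, h2] at this
      simpa using this.symm
    · rintro ⟨hj, hbits⟩
      refine ⟨finFunctionFinEquiv.symm ⟨j, hj⟩, fun i => ?_, by simp⟩
      rw [hs]
      by_cases hi : (i : ℕ) ∈ t'
      · simp only [hi, if_pos, mem_singleton]
        have := hsymm ⟨j, hj⟩ i
        have hb := hbits _ hi
        apply Fin.ext
        simp [this, hb]
      · simp [hi]
  have hinj : Function.Injective (fun f : Fin K → Fin 2 => ((finFunctionFinEquiv f : Fin (2^K)) : ℕ)) :=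
    fun a b h => finFunctionFinEquiv.injective (Fin.ext h)
  rw [← himg, Finset.card_image_of_injective _ hinj, Fintype.card_piFinset]
  have hcard : (Finset.univ.filter (fun i : Fin K => (i : ℕ) ∈ t')).card = t'.card := by
    rw [← Finset.card_image_of_injective _ Fin.val_injective]
    congr 1
    ext m
    simp only [mem_image, mem_filter, mem_univ, true_and]
    constructor
    · rintro ⟨i, hi, rfl⟩; exact hi
    · intro hm; exact ⟨⟨m, ht' m hm⟩, hm, rfl⟩
  have h1 : ∏ i, (s i).card = ∏ i : Fin K, (if (i:ℕ) ∈ t' then 1 else 2) := by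
    refine Finset.prod_congr rfl fun i _ => ?_
    rw [hs]; by_cases hi : (i:ℕ) ∈ t' <;> simp [hi]
  rw [h1, Finset.prod_ite, Finset.prod_const, Finset.prod_const, one_pow, one_mul]
  congr 1
  rw [Finset.filter_not, Finset.card_sdiff_of_subset (Finset.filter_subset _ _), hcard,
    Finset.card_univ, Fintype.card_fin]


lemma floor_div_nat' (y : ℝ) (d : ℕ) (hd : 0 < d) : ⌊y / d⌋ = ⌊y⌋ / d := by
  have hd' : (0:ℝ) < d := by exact_mod_cast hd
  rw [Int.floor_eq_iff]
  constructor
  · rw [le_div_iff₀ hd']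
    calc ((⌊y⌋ / d : ℤ) : ℝ) * d = ((⌊y⌋ / d * d : ℤ) : ℝ) := by push_cast; ring
      _ ≤ (⌊y⌋ : ℝ) := by exact_mod_cast Int.ediv_mul_le ⌊y⌋ (by exact_mod_cast hd.ne' : (d:ℤ) ≠ 0)
      _ ≤ y := Int.floor_le y
  · rw [div_lt_iff₀ hd']
    have h1 : y < ⌊y⌋ + 1 := Int.lt_floor_add_one y
    have h2 : (⌊y⌋ + 1 : ℤ) ≤ (⌊y⌋ / d + 1) * d := by
      have := Int.emod_emod_of_dvd -- dummy
      have h3 : ⌊y⌋ % d < d := Int.emod_lt_of_pos _ (by exact_mod_cast hd)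
      have h4 : ⌊y⌋ % d + d * (⌊y⌋ / d) = ⌊y⌋ := Int.emod_add_mul_ediv _ _
      nlinarith [h3, h4]
    calc y < (⌊y⌋ : ℝ) + 1 := h1
      _ = ((⌊y⌋ + 1 : ℤ) : ℝ) := by push_cast; ring
      _ ≤ (((⌊y⌋ / d + 1) * d : ℤ) : ℝ) := by exact_mod_cast h2
      _ = ((⌊y⌋ / d : ℤ) + 1) * d := by push_cast; ring

lemma bitk_eq (K k j : ℕ) (x : ℝ) (hk1 : 1 ≤ k) (hkK : k ≤ K)
    (hj : ⌊(2:ℝ)^K * x⌋ = (j : ℤ)) :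
    bitk k x = ((j / 2^(K-k)) % 2 : ℕ) := by
  have hpow : ∀ m : ℕ, m ≤ K → ⌊(2:ℝ)^m * x⌋ = (j / 2^(K-m) : ℕ) := by
    intro m hm
    have h1 : (2:ℝ)^m * x = (2:ℝ)^K * x / (2^(K-m) : ℕ) := by
      push_cast
      rw [eq_div_iff (by positivity), mul_right_comm, ← pow_add]
      congr 2
      omega
    rw [h1, floor_div_nat' _ _ (by positivity), hj, Int.natCast_div]
  unfold bitk
  rw [hpow k hkK, hpow (k-1) (by omega)]
  have hKk : K - (k-1) = (K - k) + 1 := by omega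
  rw [hKk, pow_succ, ← Nat.div_div_eq_div_mul]
  set a := j / 2^(K-k)
  have := Nat.div_add_mod a 2
  omega

lemma measurable_bitk (k : ℕ) : Measurable (bitk k) := by
  unfold bitk
  exact ((measurable_const.mul measurable_id).floor).sub
    (measurable_const.mul ((measurable_const.mul measurable_id).floor))


lemma key_measure (t : Finset ℕ) (ht : ∀ k ∈ t, 1 ≤ k) :
    volume.restrict (Set.Icc (0:ℝ) 1) {x | ∀ k ∈ t, bitk k x ≠ 0}
      = (2⁻¹ : ℝ≥0∞) ^ t.card := by
  classical
  set K := t.sup id with hKdef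
  have hkK : ∀ k ∈ t, k ≤ K := fun k hk => Finset.le_sup (f := id) hk
  have hsub : t ⊆ Finset.Icc 1 K := fun k hk => Finset.mem_Icc.2 ⟨ht k hk, hkK k hk⟩
  have hc : t.card ≤ K := by
    have := Finset.card_le_card hsub
    simpa [Nat.card_Icc] using this
  set S : Set ℝ := {x | ∀ k ∈ t, bitk k x ≠ 0} with hSdef
  have hS : MeasurableSet S := by
    have : S = ⋂ k ∈ t, (bitk k) ⁻¹' {0}ᶜ := by
      ext x; simp [hSdef]
    rw [this]
    exact MeasurableSet.biInter t.countable_toSet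
      (fun k _ => (measurable_bitk k) (measurableSet_singleton 0).compl)
  rw [Measure.restrict_apply hS]
  have h2Kpos : (0:ℝ) < 2^K := by positivity
  -- replace Icc by Ico
  have hIccIco : volume (S ∩ Set.Icc 0 1) = volume (S ∩ Set.Ico 0 1) := by
    apply le_antisymm
    · have hsub2 : S ∩ Set.Icc 0 1 ⊆ (S ∩ Set.Ico 0 1) ∪ {1} := by
        rintro x ⟨hxS, hx0, hx1⟩
        rcases hx1.lt_or_eq with h | h
        · exact Or.inl ⟨hxS, hx0, h⟩
        · exact Or.inr h
      calc volume (S ∩ Set.Icc 0 1) ≤ volume ((S ∩ Set.Ico 0 1) ∪ {1}) := measure_mono hsub2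
        _ ≤ volume (S ∩ Set.Ico 0 1) + volume ({1} : Set ℝ) := measure_union_le _ _
        _ = volume (S ∩ Set.Ico 0 1) := by rw [Real.volume_singleton, add_zero]
    · exact measure_mono (Set.inter_subset_inter_right _ Set.Ico_subset_Icc_self)
  rw [hIccIco]
  set J : Finset ℕ := (Finset.range (2^K)).filter
    (fun j => ∀ k ∈ t, j / 2^(K-k) % 2 = 1) with hJdef
  have hset : S ∩ Set.Ico 0 1 = ⋃ j ∈ J, Set.Ico ((j:ℝ)/2^K) ((j+1)/2^K) := by
    ext x
    simp only [Set.mem_inter_iff, Set.mem_iUnion, Set.mem_Ico, hJdef, Finset.mem_filter,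
      Finset.mem_range, exists_prop, hSdef, Set.mem_setOf_eq]
    constructor
    · rintro ⟨hxS, hx0, hx1⟩
      have hn0 : (0:ℤ) ≤ ⌊(2:ℝ)^K * x⌋ := Int.floor_nonneg.2 (by positivity)
      set j := ⌊(2:ℝ)^K * x⌋.toNat with hjdef
      have hj : ⌊(2:ℝ)^K * x⌋ = (j:ℤ) := (Int.toNat_of_nonneg hn0).symm
      have hjlt : j < 2^K := by
        have h1 : ((j:ℤ):ℝ) ≤ (2:ℝ)^K * x := hj ▸ Int.floor_le _
        by_contra hcon
        push_neg at hcon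
        have h2 : (2:ℝ)^K ≤ (j:ℝ) := by
          calc (2:ℝ)^K = ((2^K : ℕ) : ℝ) := by push_cast; ring
            _ ≤ (j:ℝ) := by exact_mod_cast hcon
        push_cast at h1
        nlinarith
      refine ⟨j, ⟨hjlt, fun k hk => ?_⟩, ?_, ?_⟩
      · have hb := bitk_eq K k j x (ht k hk) (hkK k hk) hj
        have hne := hxS k hk
        rw [hb] at hne
        omega
      · rw [div_le_iff₀ h2Kpos, mul_comm]
        have := Int.floor_le ((2:ℝ)^K * x)
        rw [hj] at this
        exact_mod_cast this
      · rw [lt_div_iff₀ h2Kpos, mul_comm]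
        have := Int.lt_floor_add_one ((2:ℝ)^K * x)
        rw [hj] at this
        push_cast at this ⊢
        linarith
    · rintro ⟨j, ⟨hjlt, hbits⟩, hxl, hxr⟩
      have hj : ⌊(2:ℝ)^K * x⌋ = (j:ℤ) := by
        rw [Int.floor_eq_iff]
        constructor
        · push_cast
          rw [div_le_iff₀ h2Kpos] at hxl
          linarith
        · push_cast
          rw [lt_div_iff₀ h2Kpos] at hxr
          linarith
      have hx0 : (0:ℝ) ≤ x := le_trans (by positivity) hxl
      have hx1 : x < 1 := by
        have hj1 : ((j:ℝ)+1) ≤ 2^K := by exact_mod_cast Nat.succ_le_of_lt hjlt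
        calc x < ((j:ℝ)+1)/2^K := hxr
          _ ≤ 2^K / 2^K := by gcongr
          _ = 1 := div_self h2Kpos.ne'
      refine ⟨fun k hk => ?_, hx0, hx1⟩
      rw [bitk_eq K k j x (ht k hk) (hkK k hk) hj, hbits k hk]
      norm_num
  rw [hset]
  have hdisj : (J : Set ℕ).PairwiseDisjoint (fun j : ℕ => Set.Ico ((j:ℝ)/2^K) ((j+1)/2^K)) := by
    intro a _ b _ hab
    rw [Function.onFun, Set.Ico_disjoint_Ico]
    rcases Nat.lt_or_ge a b with h | h
    · apply le_trans (min_le_left _ _)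
      apply le_trans _ (le_max_right _ _)
      gcongr
      exact_mod_cast Nat.succ_le_of_lt h
    · have h' : b < a := lt_of_le_of_ne h (Ne.symm hab)
      apply le_trans (min_le_right _ _)
      apply le_trans _ (le_max_left _ _)
      gcongr
      exact_mod_cast Nat.succ_le_of_lt h'
  rw [measure_biUnion_finset hdisj (fun j _ => measurableSet_Ico)]
  have hvol : ∀ j : ℕ, volume (Set.Ico ((j:ℝ)/2^K) ((j+1)/2^K)) = ((2:ℝ≥0∞)^K)⁻¹ := by
    intro j
    rw [Real.volume_Ico]
    have : ((j:ℝ)+1)/2^K - (j:ℝ)/2^K = 1/2^K := by ring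
    rw [this, one_div, ENNReal.ofReal_inv_of_pos h2Kpos,
      ENNReal.ofReal_pow (by norm_num : (0:ℝ) ≤ 2)]
    norm_num
  rw [Finset.sum_congr rfl (fun j _ => hvol j), Finset.sum_const, nsmul_eq_mul]
  have hJcard : J.card = 2^(K - t.card) := by
    set t' := t.image (fun k => K - k) with ht'def
    have hinj : Set.InjOn (fun k => K - k) t := by
      intro a ha b hb hh
      have := hkK a ha; have := hkK b hb
      simp only at hh
      omega
    have hJeq : J = (Finset.range (2^K)).filter (fun j => ∀ m ∈ t', j / 2^m % 2 = 1) := by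
      apply Finset.filter_congr
      intro j _
      constructor
      · rintro h m hm
        obtain ⟨k, hk, rfl⟩ := Finset.mem_image.1 hm
        exact h k hk
      · intro h k hk
        exact h _ (Finset.mem_image_of_mem _ hk)
    rw [hJeq, card_bits K t' (by
      intro m hm
      rw [ht'def] at hm
      obtain ⟨k, hk, rfl⟩ := Finset.mem_image.1 hm
      have h1k := ht k hk; have h2k := hkK k hk
      omega), ht'def, Finset.card_image_of_injOn hinj]
  rw [hJcard]
  push_cast
  have h2K : (2:ℝ≥0∞)^K = 2^(K-t.card) * 2^t.card := by
    rw [← pow_add]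
    congr 1
    omega
  rw [h2K, ENNReal.mul_inv (Or.inl (by positivity)) (Or.inl (ENNReal.pow_ne_top (by norm_num))),
    ← mul_assoc, ENNReal.mul_inv_cancel (by positivity) (ENNReal.pow_ne_top (by norm_num)),
    one_mul, ← ENNReal.inv_pow]


theorem stmt_9_part1
    {Ω : Type*} [MeasurableSpace Ω] (P : Measure Ω) [IsProbabilityMeasure P]
    (ξ : ℕ → Ω → ℝ) (hmeas : ∀ i, Measurable (ξ i))
    (hindep : iIndepFun ξ P)
    (hunif : ∀ i, Measure.map (ξ i) P = volume.restrict (Set.Icc (0 : ℝ) 1))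
    (ν : ℕ) (hν : 1 ≤ ν) (K : ℕ) :
    (P {ω | ∀ k : ℕ, 1 ≤ k → k ≤ K → ∃ i < ν, bitk k (ξ i ω) = 0}).toReal
        = (1 - (2 : ℝ) ^ (-(ν : ℤ))) ^ K := by
  classical
  set s : Finset ℕ := Finset.Icc 1 K with hsdef
  set A : ℕ → Set ℝ := fun k => {x | bitk k x ≠ 0} with hAdef
  have hAmeas : ∀ k, MeasurableSet (A k) := fun k =>
    (measurable_bitk k) (measurableSet_singleton 0).compl
  set D : ℕ → Set Ω := fun k => ⋂ i ∈ Finset.range ν, (ξ i) ⁻¹' (A k) with hDdef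
  have hDmeas : ∀ k, MeasurableSet (D k) := fun k =>
    MeasurableSet.biInter (Finset.range ν).countable_toSet
      (fun i _ => (hmeas i) (hAmeas k))
  set E : Set Ω := {ω | ∀ k : ℕ, 1 ≤ k → k ≤ K → ∃ i < ν, bitk k (ξ i ω) = 0} with hEdef
  have hE : E = ⋂ k ∈ s, (D k)ᶜ := by
    ext ω
    simp only [hEdef, Set.mem_setOf_eq, Set.mem_iInter, hsdef, Finset.mem_Icc, Set.mem_compl_iff,
      hDdef, Set.mem_iInter, Set.mem_preimage, hAdef, Set.mem_setOf_eq, Finset.mem_range]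
    constructor
    · rintro h k ⟨hk1, hk2⟩ hcon
      obtain ⟨i, hi, hbit⟩ := h k hk1 hk2
      exact (hcon i hi) hbit
    · intro h k hk1 hk2
      have := h k ⟨hk1, hk2⟩
      push_neg at this
      obtain ⟨i, hi, hbit⟩ := this
      exact ⟨i, hi, hbit⟩
  have hEmeas : MeasurableSet E := by
    rw [hE]
    exact MeasurableSet.biInter s.countable_toSet (fun k _ => (hDmeas k).compl)
  -- intersection probabilities
  have hBinter : ∀ u : Finset ℕ, (⋂ k ∈ u, A k) = {x | ∀ k ∈ u, bitk k x ≠ 0} := by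
    intro u; ext x; simp [hAdef]
  have hDinter : ∀ u : Finset ℕ, u ⊆ s →
      (P (⋂ k ∈ u, D k)).toReal = (((2:ℝ)^(-(ν:ℤ)))) ^ u.card := by
    intro u hu
    have hB : MeasurableSet (⋂ k ∈ u, A k) :=
      MeasurableSet.biInter u.countable_toSet (fun k _ => hAmeas k)
    have hswap : (⋂ k ∈ u, D k) = ⋂ i ∈ Finset.range ν, (ξ i) ⁻¹' (⋂ k ∈ u, A k) := by
      ext ω
      simp only [hDdef, Set.mem_iInter, Set.mem_preimage]
      exact ⟨fun h i hi k hk => h k hk i hi, fun h k hk i hi => h i hi k hk⟩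
    have hval : P (⋂ k ∈ u, D k) = ((2⁻¹ : ℝ≥0∞) ^ u.card) ^ ν := by
      rw [hswap, hindep.meas_biInter (S := Finset.range ν)
        (s := fun i => (ξ i) ⁻¹' (⋂ k ∈ u, A k)) (fun i _ => ⟨_, hB, rfl⟩)]
      have heach : ∀ i, P ((ξ i) ⁻¹' (⋂ k ∈ u, A k)) = (2⁻¹ : ℝ≥0∞) ^ u.card := by
        intro i
        rw [← Measure.map_apply (hmeas i) hB, hunif i, hBinter u]
        exact key_measure u (fun k hk => (Finset.mem_Icc.1 (hu hk)).1)
      rw [Finset.prod_congr rfl (fun i _ => heach i), Finset.prod_const, Finset.card_range]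
    rw [hval]
    rw [← pow_mul, ENNReal.toReal_pow]
    norm_num
    rw [one_div, inv_pow, mul_comm, pow_mul]
  -- indicator decomposition
  have hptwise : ∀ ω, Set.indicator E (fun _ => (1:ℝ)) ω
      = ∑ u ∈ s.powerset, (-1:ℝ) ^ u.card *
          Set.indicator (⋂ k ∈ u, D k) (fun _ => (1:ℝ)) ω := by
    intro ω
    have hprod : ∀ u : Finset ℕ, Set.indicator (⋂ k ∈ u, D k) (fun _ => (1:ℝ)) ω
        = ∏ k ∈ u, Set.indicator (D k) (fun _ => (1:ℝ)) ω := by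
      intro u
      by_cases h : ∀ k ∈ u, ω ∈ D k
      · rw [Set.indicator_of_mem (by simpa [Set.mem_iInter] using h), eq_comm]
        exact Finset.prod_eq_one (fun k hk => Set.indicator_of_mem (h k hk) _)
      · push_neg at h
        obtain ⟨k, hk, hnot⟩ := h
        rw [Set.indicator_of_notMem (by simp only [Set.mem_iInter]; push_neg; exact ⟨k, hk, hnot⟩)]
        rw [Finset.prod_eq_zero hk (Set.indicator_of_notMem hnot _)]
    have hEind : Set.indicator E (fun _ => (1:ℝ)) ω
        = ∏ k ∈ s, (1 - Set.indicator (D k) (fun _ => (1:ℝ)) ω) := by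
      by_cases h : ω ∈ E
      · rw [Set.indicator_of_mem h]
        have h' : ∀ k ∈ s, ω ∉ D k := by
          rw [hE] at h
          simpa [Set.mem_iInter] using h
        rw [eq_comm]
        apply Finset.prod_eq_one
        intro k hk
        rw [Set.indicator_of_notMem (h' k hk)]
        norm_num
      · rw [Set.indicator_of_notMem h]
        have h' : ∃ k ∈ s, ω ∈ D k := by
          rw [hE] at h
          simpa [Set.mem_iInter] using h
        obtain ⟨k, hk, hmem⟩ := h'
        rw [eq_comm]
        apply Finset.prod_eq_zero hk
        rw [Set.indicator_of_mem hmem]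
        norm_num
    rw [hEind]
    set F : ℕ → ℝ := fun k => Set.indicator (D k) (fun _ => (1:ℝ)) ω with hF
    have h1 : ∀ k ∈ s, (1:ℝ) - F k = (fun k => -F k) k + (fun _ => (1:ℝ)) k := by
      intro k _; simp; ring
    rw [Finset.prod_congr rfl h1, Finset.prod_add]
    refine Finset.sum_congr rfl fun u hu => ?_
    rw [hprod u, Finset.prod_const_one, mul_one]
    have hneg : ∏ k ∈ u, -F k = (-1:ℝ)^u.card * ∏ k ∈ u, F k := by
      rw [← Finset.prod_const, ← Finset.prod_mul_distrib]
      exact Finset.prod_congr rfl (fun k _ => by ring)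
    rw [hneg]
  -- integrate
  have hint : ∀ u : Finset ℕ, Integrable (fun ω => (-1:ℝ) ^ u.card *
      Set.indicator (⋂ k ∈ u, D k) (fun _ => (1:ℝ)) ω) P := by
    intro u
    have hm : MeasurableSet (⋂ k ∈ u, D k) :=
      MeasurableSet.biInter u.countable_toSet (fun k _ => hDmeas k)
    exact ((integrable_const (1:ℝ)).indicator hm).const_mul _
  have hPE : (P E).toReal = ∫ ω, Set.indicator E (fun _ => (1:ℝ)) ω ∂P :=
    (integral_indicator_one hEmeas).symm
  rw [hPE]
  calc ∫ ω, Set.indicator E (fun _ => (1:ℝ)) ω ∂P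
      = ∫ ω, ∑ u ∈ s.powerset, (-1:ℝ) ^ u.card *
          Set.indicator (⋂ k ∈ u, D k) (fun _ => (1:ℝ)) ω ∂P := by
        congr 1; ext ω; exact hptwise ω
    _ = ∑ u ∈ s.powerset, ∫ ω, (-1:ℝ) ^ u.card *
          Set.indicator (⋂ k ∈ u, D k) (fun _ => (1:ℝ)) ω ∂P :=
        integral_finset_sum _ (fun u _ => hint u)
    _ = ∑ u ∈ s.powerset, (-1:ℝ) ^ u.card * (P (⋂ k ∈ u, D k)).toReal := by
        refine Finset.sum_congr rfl fun u hu => ?_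
        rw [integral_const_mul]
        congr 1
        exact integral_indicator_one
          (MeasurableSet.biInter u.countable_toSet (fun k _ => hDmeas k))
    _ = ∑ u ∈ s.powerset, (-(2:ℝ)^(-(ν:ℤ))) ^ u.card := by
        refine Finset.sum_congr rfl fun u hu => ?_
        rw [hDinter u (Finset.mem_powerset.1 hu), ← mul_pow, neg_one_mul]
    _ = (1 - (2:ℝ)^(-(ν:ℤ))) ^ K := by
        set x : ℝ := -(2:ℝ)^(-(ν:ℤ)) with hx
        calc ∑ u ∈ s.powerset, x ^ u.card
            = ∑ u ∈ s.powerset, (∏ _k ∈ u, x) * ∏ _k ∈ s \ u, (1:ℝ) := by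
              simp [Finset.prod_const]
          _ = ∏ _k ∈ s, (x + 1) := (Finset.prod_add _ _ s).symm
          _ = (x+1) ^ s.card := Finset.prod_const _
          _ = (1 - (2:ℝ)^(-(ν:ℤ))) ^ K := by
              rw [hx, hsdef, Nat.card_Icc]
              norm_num
              ring_nf


/-- for i.i.d. uniform `ξ^1, …, ξ^ν` on `[0,1]` and
`K^ν = ⌈2^{ν+1} log(ν+1)⌉`, the probability that for every `k ∈ {1,…,K^ν}` some
`i ∈ {1,…,ν}` has `bit_k(ξ^i) = 0` equals `(1 − 2^{−ν})^{K^ν}`, which is at most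
`exp(−2^{−ν} K^ν)`, which is at most `1/(ν+1)²`. -/
theorem stmt_9
    {Ω : Type*} [MeasurableSpace Ω] (P : Measure Ω) [IsProbabilityMeasure P]
    (ξ : ℕ → Ω → ℝ) (hmeas : ∀ i, Measurable (ξ i))
    (hindep : iIndepFun ξ P)
    (hunif : ∀ i, Measure.map (ξ i) P = volume.restrict (Set.Icc (0 : ℝ) 1))
    (ν : ℕ) (hν : 1 ≤ ν) (K : ℕ)
    (hK : (K : ℤ) = ⌈(2 : ℝ) ^ (ν + 1) * Real.log (ν + 1)⌉) :
    (P {ω | ∀ k : ℕ, 1 ≤ k → k ≤ K → ∃ i < ν, bitk k (ξ i ω) = 0}).toReal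
        = (1 - (2 : ℝ) ^ (-(ν : ℤ))) ^ K ∧
      (1 - (2 : ℝ) ^ (-(ν : ℤ))) ^ K ≤ Real.exp (-(2 : ℝ) ^ (-(ν : ℤ)) * K) ∧
      Real.exp (-(2 : ℝ) ^ (-(ν : ℤ)) * K) ≤ 1 / ((ν : ℝ) + 1) ^ 2 := by
  set x : ℝ := (2:ℝ) ^ (-(ν:ℤ)) with hxdef
  have hx0 : 0 < x := by positivity
  have hx1 : x ≤ 1 := by
    rw [hxdef, zpow_neg, zpow_natCast]
    rw [inv_le_one_iff₀]
    right
    exact one_le_pow₀ (by norm_num)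
  refine ⟨stmt_9_part1 P ξ hmeas hindep hunif ν hν K, ?_, ?_⟩
  · have h1 : 1 - x ≤ Real.exp (-x) := by
      have := Real.add_one_le_exp (-x)
      linarith
    calc (1 - x) ^ K ≤ Real.exp (-x) ^ K :=
          pow_le_pow_left₀ (by linarith) h1 K
      _ = Real.exp (-x * K) := by
          rw [← Real.exp_nat_mul]
          ring_nf
  · set a : ℝ := (ν : ℝ) + 1 with hadef
    have ha1 : (1:ℝ) < a := by
      rw [hadef]
      have : (1:ℝ) ≤ (ν:ℝ) := by exact_mod_cast hν
      linarith
    have ha0 : (0:ℝ) < a := by linarith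
    have hlog0 : 0 ≤ Real.log a := Real.log_nonneg ha1.le
    have hKge : (2:ℝ)^(ν+1) * Real.log a ≤ (K:ℝ) := by
      have h1 : ((K:ℤ) : ℝ) = (K:ℝ) := by push_cast; ring
      have h2 : (2:ℝ)^(ν+1) * Real.log a ≤ ((⌈(2:ℝ)^(ν+1) * Real.log ((ν:ℝ)+1)⌉ : ℤ) : ℝ) := by
        rw [hadef]
        exact Int.le_ceil _
      rw [← hK] at h2
      rw [← h1]
      exact_mod_cast h2
    have hx2 : x * (2:ℝ)^(ν+1) = 2 := by
      rw [hxdef]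
      have : (2:ℝ)^(ν+1) = (2:ℝ)^(((ν:ℤ))+1) := by
        rw [← zpow_natCast]
        push_cast
        ring_nf
      rw [this, ← zpow_add₀ (by norm_num : (2:ℝ) ≠ 0)]
      norm_num
    have hmain : 2 * Real.log a ≤ x * K := by
      calc 2 * Real.log a = x * ((2:ℝ)^(ν+1) * Real.log a) := by
            rw [← mul_assoc, hx2]
        _ ≤ x * K := by
            apply mul_le_mul_of_nonneg_left hKge hx0.le
    calc Real.exp (-x * K) ≤ Real.exp (-(2 * Real.log a)) := by
          apply Real.exp_le_exp.2
          linarith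
      _ = 1 / a ^ 2 := by
          rw [Real.exp_neg, two_mul, Real.exp_add, Real.exp_log ha0, one_div, sq]
      _ ≤ 1 / ((ν:ℝ) + 1) ^ 2 := by rw [hadef]
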